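/- For α ∈ (0,1) and x > 0, the Mittag-Leffler function satisfies the two-sided bounds 1/(1 + Γ(1−α)·x) ≤ E_α(−x) ≤ Γ(1+α)/(Γ(1+α) + x). -/

import Mathlib

/-- Two-parameter Mittag-Leffler function `E_{α,β}(z) = ∑ zⁿ/Γ(nα+β)`. -/
noncomputable def mlE (α β z : ℝ) : ℝ := ∑' n : ℕ, z ^ n / Real.Gamma (n * α + β)

open MeasureTheory Set Real intervalIntegral


lemma myGamma_ge {M y : ℝ} (hM : 1 ≤ M) (hy : 1 ≤ y) :
    M ^ y * Real.exp (-(2*M)) ≤ Real.Gamma y := by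
  have hM0 : (0:ℝ) < M := lt_of_lt_of_le one_pos hM
  have hy0 : (0:ℝ) < y := lt_of_lt_of_le one_pos hy
  rw [Real.Gamma_eq_integral hy0]
  have hint : IntegrableOn (fun x : ℝ => Real.exp (-x) * x ^ (y - 1)) (Ioi 0) :=
    Real.GammaIntegral_convergent hy0
  have hsub : Ioc M (2*M) ⊆ Ioi (0:ℝ) := fun x hx => lt_trans hM0 hx.1
  have step1 : ∫ x in Ioc M (2*M), Real.exp (-x) * x ^ (y - 1) ≤
      ∫ x in Ioi 0, Real.exp (-x) * x ^ (y - 1) := by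
    apply setIntegral_mono_set hint
    · filter_upwards [ae_restrict_mem measurableSet_Ioi] with x hx
      exact mul_nonneg (Real.exp_pos _).le (Real.rpow_nonneg (le_of_lt hx) _)
    · exact HasSubset.Subset.eventuallyLE hsub
  refine le_trans ?_ step1
  have step2 : ∫ x in Ioc M (2*M), (Real.exp (-(2*M)) * M ^ (y-1)) ≤
      ∫ x in Ioc M (2*M), Real.exp (-x) * x ^ (y - 1) := by
    apply setIntegral_mono_on (integrableOn_const measure_Ioc_lt_top.ne)
      (hint.mono_set hsub) measurableSet_Ioc
    intro x hx
    apply mul_le_mul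
    · exact Real.exp_le_exp.2 (neg_le_neg hx.2)
    · exact Real.rpow_le_rpow (le_of_lt hM0) hx.1.le (by linarith)
    · exact Real.rpow_nonneg hM0.le _
    · exact (Real.exp_pos _).le
  refine le_trans ?_ step2
  rw [setIntegral_const, Real.volume_real_Ioc_of_le (by linarith : M ≤ 2*M), smul_eq_mul]
  have : (2*M - M) = M := by ring
  rw [this]
  have hMy : M ^ y = M * M ^ (y-1) := by
    nth_rewrite 2 [← Real.rpow_one M]
    rw [← Real.rpow_add hM0]
    ring_nf
  rw [hMy]; apply le_of_eq; ring




lemma summable_ml {α β : ℝ} (hα : 0 < α) (hβ : 0 < β) {x : ℝ} (hx : 0 ≤ x) :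
    Summable (fun n : ℕ => x ^ n / Real.Gamma ((n:ℝ) * α + β)) := by
  set M : ℝ := max 1 ((2*x) ^ α⁻¹) with hMdef
  have hM1 : 1 ≤ M := le_max_left _ _
  have hM0 : (0:ℝ) < M := lt_of_lt_of_le one_pos hM1
  have hMα : 2 * x ≤ M ^ α := by
    calc 2 * x = ((2*x) ^ α⁻¹) ^ α := by
          rw [← Real.rpow_mul (by linarith : (0:ℝ) ≤ 2*x), inv_mul_cancel₀ hα.ne', Real.rpow_one]
      _ ≤ M ^ α := Real.rpow_le_rpow (Real.rpow_nonneg (by linarith) _) (le_max_right _ _) hα.le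
  obtain ⟨N, hN⟩ := exists_nat_ge ((1-β)/α)
  rw [← summable_nat_add_iff N]
  have key : ∀ n : ℕ, x ^ (n + N) / Real.Gamma (((n + N : ℕ):ℝ) * α + β) ≤
      (Real.exp (2*M) / M ^ β) * (1/2) ^ n := by
    intro n
    have hy1 : 1 ≤ ((n + N : ℕ):ℝ) * α + β := by
      push_cast
      have : ((1:ℝ)-β)/α ≤ (n + N : ℝ) := le_trans hN (by push_cast; linarith [Nat.cast_nonneg (α := ℝ) n])
      rw [div_le_iff₀ hα] at this
      linarith
    have hG := myGamma_ge hM1 hy1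
    have hGpos : (0:ℝ) < M ^ (((n + N : ℕ):ℝ) * α + β) * Real.exp (-(2*M)) :=
      mul_pos (Real.rpow_pos_of_pos hM0 _) (Real.exp_pos _)
    have hGpos' : (0:ℝ) < Real.Gamma (((n + N : ℕ):ℝ) * α + β) := lt_of_lt_of_le hGpos hG
    rw [div_le_iff₀ hGpos']
    calc x ^ (n + N) ≤ (M ^ α / 2) ^ (n + N) := by
          apply pow_le_pow_left₀ hx
          rw [le_div_iff₀ two_pos]; linarith
      _ = (M ^ α) ^ (n+N) * (1/2)^(n+N) := by rw [div_pow, one_div, inv_pow, div_eq_mul_inv]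
      _ ≤ (M ^ α) ^ (n+N) * (1/2)^n := by
          apply mul_le_mul_of_nonneg_left _ (by positivity)
          apply pow_le_pow_of_le_one (by norm_num) (by norm_num)
          omega
      _ = (Real.exp (2*M) / M ^ β * (1/2)^n) * (M ^ (((n+N:ℕ):ℝ)*α + β) * Real.exp (-(2*M))) := by
          rw [Real.rpow_add hM0, ← Real.rpow_natCast (M ^ α) (n+N), ← Real.rpow_mul hM0.le]
          rw [Real.exp_neg]
          push_cast
          field_simp
      _ ≤ _ := by
          apply mul_le_mul_of_nonneg_left hG
          positivity
  apply Summable.of_nonneg_of_le _ key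
  · exact (summable_geometric_of_lt_one (by norm_num) (by norm_num)).mul_left _
  · intro n
    positivity




noncomputable def mlW (α β t : ℝ) : ℝ :=
  ∑' n : ℕ, (-1)^n * t ^ ((n:ℝ) * α + β - 1) / Real.Gamma ((n:ℝ) * α + β)

noncomputable def Cml (α β t : ℝ) : ℝ := ∑' n : ℕ, (t ^ α) ^ n / Real.Gamma ((n:ℝ) * α + β)

section basic
variable {α β t s : ℝ} (hα : 0 < α) (hβ : 0 < β)

lemma Gpos (n : ℕ) (hα : 0 < α) (hβ : 0 < β) : 0 < Real.Gamma ((n:ℝ) * α + β) :=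
  Real.Gamma_pos_of_pos (by positivity)

lemma term_eq (hα : 0 < α) (ht : 0 < t) (n : ℕ) :
    t ^ ((n:ℝ) * α + β - 1) = t ^ (β - 1) * (t ^ α) ^ n := by
  rw [show (n:ℝ) * α + β - 1 = α * n + (β - 1) by ring, Real.rpow_add ht,
    Real.rpow_mul ht.le, Real.rpow_natCast]
  ring

lemma summable_norm_mlW (hα : 0 < α) (hβ : 0 < β) (ht : 0 < t) :
    Summable (fun n : ℕ => t ^ ((n:ℝ) * α + β - 1) / Real.Gamma ((n:ℝ) * α + β)) := by
  have := (summable_ml hα hβ (le_of_lt (Real.rpow_pos_of_pos ht α))).mul_left (t ^ (β-1))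
  apply this.congr
  intro n
  rw [term_eq hα ht, mul_div_assoc]

lemma summable_mlW (hα : 0 < α) (hβ : 0 < β) (ht : 0 < t) :
    Summable (fun n : ℕ => (-1:ℝ)^n * t ^ ((n:ℝ) * α + β - 1) / Real.Gamma ((n:ℝ) * α + β)) := by
  apply Summable.of_norm
  apply (summable_norm_mlW hα hβ ht).congr
  intro n
  rw [Real.norm_eq_abs, abs_div, abs_mul, abs_pow, abs_neg, abs_one, one_pow, one_mul,
    abs_of_nonneg (Real.rpow_nonneg ht.le _), abs_of_nonneg (Gpos n hα hβ).le]

lemma Cml_nonneg (hα : 0 < α) (hβ : 0 < β) (ht : 0 ≤ t) : 0 ≤ Cml α β t :=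
  tsum_nonneg (fun n => by positivity)

lemma abs_mlW_le (hα : 0 < α) (hβ : 0 < β) (hs : 0 < s) (hst : s ≤ t) :
    |mlW α β s| ≤ s ^ (β - 1) * Cml α β t := by
  have ht : 0 < t := lt_of_lt_of_le hs hst
  refine le_trans (norm_tsum_le_tsum_norm ((summable_mlW hα hβ hs).norm)) ?_
  rw [show s ^ (β-1) * Cml α β t = ∑' n : ℕ, s ^ (β-1) * ((t^α)^n / Real.Gamma ((n:ℝ)*α+β)) from
    (tsum_mul_left).symm]
  apply Summable.tsum_le_tsum _ (summable_mlW hα hβ hs).norm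
    (((summable_ml hα hβ (Real.rpow_pos_of_pos ht α).le).mul_left _))
  intro n
  rw [Real.norm_eq_abs, abs_div, abs_mul, abs_pow, abs_neg, abs_one, one_pow, one_mul,
    abs_of_nonneg (Real.rpow_nonneg hs.le _), abs_of_nonneg (Gpos n hα hβ).le,
    term_eq hα hs, mul_div_assoc]
  apply mul_le_mul_of_nonneg_left _ (Real.rpow_nonneg hs.le _)
  have h1 : (s^α)^n ≤ (t^α)^n :=
    pow_le_pow_left₀ (Real.rpow_nonneg hs.le α) (Real.rpow_le_rpow hs.le hst hα.le) n
  exact div_le_div_of_nonneg_right h1 (Gpos n hα hβ).le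

lemma continuousOn_mlW (hα : 0 < α) (hβ : 0 < β) : ContinuousOn (mlW α β) (Ioi 0) := by
  intro t0 ht0
  simp only [mem_Ioi] at ht0
  have hsub : Icc (t0/2) (2*t0) ⊆ Ioi (0:ℝ) := by
    intro x hx; exact lt_of_lt_of_le (by linarith) hx.1
  have hco : ContinuousOn (mlW α β) (Icc (t0/2) (2*t0)) := by
    apply continuousOn_tsum (u := fun n : ℕ =>
      ((t0/2) ^ (β-1) + (2*t0) ^ (β-1)) * (((2*t0) ^ α) ^ n / Real.Gamma ((n:ℝ)*α+β)))
    · intro n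
      apply ContinuousOn.div_const
      apply ContinuousOn.mul continuousOn_const
      apply ContinuousOn.rpow_const continuousOn_id
      intro x hx
      exact Or.inl (ne_of_gt (hsub hx))
    · exact (summable_ml hα hβ (Real.rpow_pos_of_pos (by linarith) α).le).mul_left _
    · intro n x hx
      have hx0 : 0 < x := hsub hx
      rw [Real.norm_eq_abs, abs_div, abs_mul, abs_pow, abs_neg, abs_one, one_pow, one_mul,
        abs_of_nonneg (Real.rpow_nonneg hx0.le _), abs_of_nonneg (Gpos n hα hβ).le,
        term_eq hα hx0, mul_div_assoc]
      apply mul_le_mul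
      · rcases le_or_gt 0 (β - 1) with h | h
        · refine le_trans (Real.rpow_le_rpow hx0.le hx.2 h) ?_
          have : (0:ℝ) ≤ (t0/2) ^ (β-1) := Real.rpow_nonneg (by linarith) _
          linarith
        · refine le_trans (Real.rpow_le_rpow_of_nonpos (by linarith) hx.1 h.le) ?_
          have : (0:ℝ) ≤ (2*t0) ^ (β-1) := Real.rpow_nonneg (by linarith) _
          linarith
      · have h1 : (x^α)^n ≤ ((2*t0)^α)^n :=
          pow_le_pow_left₀ (Real.rpow_nonneg hx0.le α) (Real.rpow_le_rpow hx0.le hx.2 hα.le) n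
        exact div_le_div_of_nonneg_right h1 (Gpos n hα hβ).le
      · positivity
      · positivity
  exact (hco.continuousAt (Icc_mem_nhds (by linarith) (by linarith))).continuousWithinAt

lemma mlW_shift (hα : 0 < α) (hβ : 0 < β) (ht : 0 < t) :
    mlW α β t = t ^ (β - 1) / Real.Gamma β - mlW α (β + α) t := by
  rw [mlW, Summable.tsum_eq_zero_add (summable_mlW hα hβ ht), sub_eq_add_neg]
  congr 1
  · norm_num
    rw [show β + -1 = β - 1 by ring]
  · rw [show -mlW α (β + α) t = ∑' n : ℕ, -((-1:ℝ)^n * t ^ ((n:ℝ)*α + (β+α) - 1) /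
      Real.Gamma ((n:ℝ)*α + (β+α))) from (tsum_neg).symm]
    congr 1
    funext n
    have he : ((n+1:ℕ):ℝ) * α + β = (n:ℝ) * α + (β + α) := by push_cast; ring
    rw [he, pow_succ]
    ring
end basic



lemma beta01 {a b : ℝ} (ha : 0 < a) (hb : 0 < b) :
    ∫ x in (0:ℝ)..1, x ^ (a-1) * (1-x) ^ (b-1)
      = Real.Gamma a * Real.Gamma b / Real.Gamma (a+b) := by
  have key := Complex.Gamma_mul_Gamma_eq_betaIntegral
    (s := (a:ℂ)) (t := (b:ℂ)) (by simpa using ha) (by simpa using hb)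
  have hBeta : Complex.betaIntegral (a:ℂ) (b:ℂ)
      = ((∫ x in (0:ℝ)..1, x ^ (a-1) * (1-x) ^ (b-1) : ℝ) : ℂ) := by
    rw [Complex.betaIntegral, ← intervalIntegral.integral_ofReal]
    apply intervalIntegral.integral_congr
    intro x hx
    rw [Set.uIcc_of_le (by norm_num : (0:ℝ) ≤ 1)] at hx
    have hx0 : (0:ℝ) ≤ x := hx.1
    have hx1 : (0:ℝ) ≤ 1 - x := by linarith [hx.2]
    push_cast
    rw [Complex.ofReal_cpow hx0, Complex.ofReal_cpow hx1]
    push_cast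
    ring
  rw [hBeta, ← Complex.ofReal_add, Complex.Gamma_ofReal, Complex.Gamma_ofReal,
    Complex.Gamma_ofReal, ← Complex.ofReal_mul, ← Complex.ofReal_mul] at key
  have := Complex.ofReal_injective key
  have hab : Real.Gamma (a+b) ≠ 0 := (Real.Gamma_pos_of_pos (by linarith)).ne'
  field_simp
  linarith [this]

lemma intInt_left {a b t : ℝ} (ha : 0 < a) (hb : 0 < b) (ht : 0 < t) :
    IntervalIntegrable (fun s => (t-s) ^ (a-1) * s ^ (b-1)) volume 0 (t/2) := by
  have hC : ∀ s ∈ Ioc (0:ℝ) (t/2), (t-s) ^ (a-1) ≤ (t/2) ^ (a-1) + t ^ (a-1) := by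
    intro s hs
    have h1 : t/2 ≤ t - s := by linarith [hs.2]
    have h2 : t - s ≤ t := by linarith [hs.1]
    rcases le_or_gt 0 (a-1) with h | h
    · have := Real.rpow_le_rpow (by linarith) h2 h
      have h3 : (0:ℝ) ≤ (t/2) ^ (a-1) := Real.rpow_nonneg (by linarith) _
      linarith
    · have := Real.rpow_le_rpow_of_nonpos (by linarith) h1 h.le
      have h3 : (0:ℝ) ≤ t ^ (a-1) := Real.rpow_nonneg (by linarith) _
      linarith
  apply IntervalIntegrable.mono_fun
    (((intervalIntegrable_rpow' (by linarith : (-1:ℝ) < b - 1)).const_mul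
      ((t/2) ^ (a-1) + t ^ (a-1))) : IntervalIntegrable
        (fun s => ((t/2) ^ (a-1) + t ^ (a-1)) * s ^ (b-1)) volume 0 (t/2))
  · apply ContinuousOn.aestronglyMeasurable _ measurableSet_uIoc
    apply ContinuousOn.mul
    · apply ContinuousOn.rpow_const (continuous_const.sub continuous_id).continuousOn
      intro x hx
      rw [Set.uIoc_of_le (by linarith : (0:ℝ) ≤ t/2)] at hx
      left; intro hcon
      have := hx.2; simp only [Pi.sub_apply, id_eq] at hcon; rw [sub_eq_zero] at hcon; linarith
    · apply ContinuousOn.rpow_const continuousOn_id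
      intro x hx
      rw [Set.uIoc_of_le (by linarith : (0:ℝ) ≤ t/2)] at hx
      exact Or.inl (ne_of_gt hx.1)
  · filter_upwards [ae_restrict_mem measurableSet_uIoc] with s hs
    rw [Set.uIoc_of_le (by linarith : (0:ℝ) ≤ t/2)] at hs
    have hs0 : (0:ℝ) < s := hs.1
    have hts : (0:ℝ) < t - s := by linarith [hs.2]
    simp only [Real.norm_eq_abs]
    rw [abs_of_nonneg (mul_nonneg (Real.rpow_nonneg hts.le _) (Real.rpow_nonneg hs0.le _)),
      abs_of_nonneg (mul_nonneg (by positivity) (Real.rpow_nonneg hs0.le _))]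
    exact mul_le_mul_of_nonneg_right (hC s hs) (Real.rpow_nonneg hs0.le _)

lemma intInt_beta {a b t : ℝ} (ha : 0 < a) (hb : 0 < b) (ht : 0 < t) :
    IntervalIntegrable (fun s => (t-s) ^ (a-1) * s ^ (b-1)) volume 0 t := by
  have h1 := intInt_left ha hb ht
  have h2 := (intInt_left hb ha ht).comp_sub_left t
  have heq : (fun x => (t - (t - x)) ^ (b-1) * (t - x) ^ (a-1))
      = fun x => (t-x) ^ (a-1) * x ^ (b-1) := by
    funext x; rw [sub_sub_cancel]; ring
  rw [heq] at h2
  have : t - t/2 = t/2 := by ring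
  rw [this, sub_zero] at h2
  exact h1.trans h2.symm

lemma beta_integrableOn {a b t : ℝ} (ha : 0 < a) (hb : 0 < b) (ht : 0 < t) :
    IntegrableOn (fun s => (t-s) ^ (a-1) * s ^ (b-1)) (Ioo 0 t) := by
  exact ((intInt_beta ha hb ht).1).mono_set Ioo_subset_Ioc_self

lemma beta_Ioo {a b t : ℝ} (ha : 0 < a) (hb : 0 < b) (ht : 0 < t) :
    ∫ s in Ioo 0 t, (t-s) ^ (a-1) * s ^ (b-1)
      = t ^ (a+b-1) * (Real.Gamma a * Real.Gamma b / Real.Gamma (a+b)) := by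
  rw [← integral_Ioc_eq_integral_Ioo, ← intervalIntegral.integral_of_le ht.le]
  have subst : t • (∫ x in (0:ℝ)..1, (t - t*x) ^ (a-1) * (t*x) ^ (b-1))
      = ∫ x in (t*0)..(t*1), (t-x) ^ (a-1) * x ^ (b-1) :=
    intervalIntegral.smul_integral_comp_mul_left (fun s => (t-s) ^ (a-1) * s ^ (b-1)) t
  rw [mul_zero, mul_one] at subst
  rw [← subst]
  have congr1 : ∫ x in (0:ℝ)..1, (t - t*x) ^ (a-1) * (t*x) ^ (b-1)
      = ∫ x in (0:ℝ)..1, (t ^ (a-1) * t ^ (b-1)) * ((1-x) ^ (a-1) * x ^ (b-1)) := by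
    apply intervalIntegral.integral_congr
    intro x hx
    rw [Set.uIcc_of_le (by norm_num : (0:ℝ) ≤ 1)] at hx
    have h1 : t - t*x = t * (1-x) := by ring
    show (t - t*x) ^ (a-1) * (t*x) ^ (b-1) = _
    rw [h1, Real.mul_rpow ht.le (by linarith [hx.2]), Real.mul_rpow ht.le hx.1]
    ring
  rw [congr1, intervalIntegral.integral_const_mul]
  have congr2 : ∫ x in (0:ℝ)..1, (1-x) ^ (a-1) * x ^ (b-1)
      = Real.Gamma b * Real.Gamma a / Real.Gamma (b+a) := by
    rw [← beta01 hb ha]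
    apply intervalIntegral.integral_congr
    intro x hx; ring
  rw [congr2]
  rw [smul_eq_mul]
  have ht' : t * (t ^ (a-1) * t ^ (b-1)) = t ^ (a+b-1) := by
    rw [← Real.rpow_add ht]
    nth_rewrite 1 [← Real.rpow_one t]
    rw [← Real.rpow_add ht]
    norm_num
    rw [show 1 + (a - 1 + (b-1)) = a + b - 1 by ring]
  rw [← ht', add_comm b a]
  ring








lemma master {α β c t : ℝ} (hα : 0 < α) (hβ : 0 < β) (hc : 0 < c) (ht : 0 < t) :
    ∫ s in Ioo 0 t, (t-s) ^ (c-1) * mlW α β s = Real.Gamma c * mlW α (β + c) t := by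
  have hGc := Real.Gamma_pos_of_pos hc
  set F : ℕ → ℝ → ℝ := fun n s =>
    ((-1:ℝ)^n / Real.Gamma ((n:ℝ)*α+β)) * ((t-s) ^ (c-1) * s ^ ((n:ℝ)*α+β-1)) with hF
  have hd : ∀ n : ℕ, (0:ℝ) < (n:ℝ)*α+β := fun n => by positivity
  -- pointwise identity on Ioo
  have hpt : ∀ s ∈ Ioo (0:ℝ) t, (t-s) ^ (c-1) * mlW α β s = ∑' n, F n s := by
    intro s hs
    rw [mlW, ← tsum_mul_left]
    congr 1
    funext n
    rw [hF]
    ring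
  rw [setIntegral_congr_fun measurableSet_Ioo hpt]
  -- interchange
  have hmeas : ∀ n : ℕ, AEStronglyMeasurable (F n) (volume.restrict (Ioo 0 t)) := by
    intro n
    apply ContinuousOn.aestronglyMeasurable _ measurableSet_Ioo
    apply ContinuousOn.mul continuousOn_const
    apply ContinuousOn.mul
    · apply ContinuousOn.rpow_const (continuous_const.sub continuous_id).continuousOn
      intro x hx
      left
      simp only [Pi.sub_apply, id_eq]
      intro hcon; rw [sub_eq_zero] at hcon; exact (ne_of_gt hx.2) hcon
    · apply ContinuousOn.rpow_const continuousOn_id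
      intro x hx; exact Or.inl (ne_of_gt hx.1)
  have hGint : ∀ n : ℕ, IntegrableOn
      (fun s => ((t-s) ^ (c-1) * s ^ ((n:ℝ)*α+β-1)) / Real.Gamma ((n:ℝ)*α+β)) (Ioo 0 t) :=
    fun n => (beta_integrableOn hc (hd n) ht).div_const _
  have hFint : ∀ n : ℕ, IntegrableOn (F n) (Ioo 0 t) := by
    intro n
    apply ((beta_integrableOn hc (hd n) ht).const_mul ((-1:ℝ)^n / Real.Gamma ((n:ℝ)*α+β)))
  have hnorm : ∀ n : ℕ, ∀ s ∈ Ioo (0:ℝ) t,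
      ‖F n s‖ = ((t-s) ^ (c-1) * s ^ ((n:ℝ)*α+β-1)) / Real.Gamma ((n:ℝ)*α+β) := by
    intro n s hs
    rw [hF]
    simp only [Real.norm_eq_abs, abs_mul, abs_div, abs_pow, abs_neg, abs_one, one_pow]
    rw [abs_of_nonneg (Gpos n hα hβ).le,
      abs_of_nonneg (Real.rpow_nonneg (by linarith [hs.2] : (0:ℝ) ≤ t - s) _),
      abs_of_nonneg (Real.rpow_nonneg hs.1.le _)]
    ring
  have hval : ∀ n : ℕ, ∫ s in Ioo 0 t, ((t-s) ^ (c-1) * s ^ ((n:ℝ)*α+β-1)) / Real.Gamma ((n:ℝ)*α+β)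
      = Real.Gamma c * (t ^ ((n:ℝ)*α+(β+c)-1) / Real.Gamma ((n:ℝ)*α+(β+c))) := by
    intro n
    rw [MeasureTheory.integral_div, beta_Ioo hc (hd n) ht]
    rw [show c + ((n:ℝ)*α+β) - 1 = (n:ℝ)*α+(β+c)-1 by ring,
      show c + ((n:ℝ)*α+β) = (n:ℝ)*α+(β+c) by ring]
    field_simp
  have key := MeasureTheory.integral_tsum (μ := volume.restrict (Ioo 0 t)) hmeas ?_
  · rw [key]
    have : ∀ n : ℕ, ∫ s in Ioo 0 t, F n s
        = Real.Gamma c * ((-1:ℝ)^n * t ^ ((n:ℝ)*α+(β+c)-1) / Real.Gamma ((n:ℝ)*α+(β+c))) := by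
      intro n
      rw [hF, MeasureTheory.integral_const_mul]
      have h2 : ∫ s in Ioo 0 t, (t-s) ^ (c-1) * s ^ ((n:ℝ)*α+β-1)
          = Real.Gamma ((n:ℝ)*α+β) * (Real.Gamma c * (t ^ ((n:ℝ)*α+(β+c)-1) / Real.Gamma ((n:ℝ)*α+(β+c)))) := by
        rw [← hval n, MeasureTheory.integral_div]
        field_simp
      rw [h2]
      field_simp [(Gpos n hα hβ).ne']
    rw [tsum_congr this, tsum_mul_left, mlW]
  · -- summability of lintegrals
    have : ∀ n : ℕ, ∫⁻ s in Ioo 0 t, ‖F n s‖ₑ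
        = ENNReal.ofReal (Real.Gamma c * (t ^ ((n:ℝ)*α+(β+c)-1) / Real.Gamma ((n:ℝ)*α+(β+c)))) := by
      intro n
      rw [← hval n, MeasureTheory.ofReal_integral_eq_lintegral_ofReal (hGint n)
        (by filter_upwards [ae_restrict_mem measurableSet_Ioo] with s hs
            have h1 : (0:ℝ) ≤ t - s := by linarith [hs.2]
            have h2 : (0:ℝ) ≤ s := hs.1.le
            positivity)]
      apply lintegral_congr_ae
      filter_upwards [ae_restrict_mem measurableSet_Ioo] with s hs
      rw [← ofReal_norm_eq_enorm, hnorm n s hs]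
    rw [tsum_congr this]
    rw [← ENNReal.ofReal_tsum_of_nonneg]
    · exact ENNReal.ofReal_ne_top
    · intro n; positivity
    · exact (summable_norm_mlW hα (by linarith : (0:ℝ) < β + c) ht).mul_left _






section new
variable {α β c t s : ℝ}

lemma kernel_meas (hc : 0 < c) (hβ : 0 < β) (hα : 0 < α) (ht : 0 < t) :
    AEStronglyMeasurable (fun s => (t-s) ^ (c-1) * mlW α β s) (volume.restrict (Ioo 0 t)) := by
  apply ContinuousOn.aestronglyMeasurable _ measurableSet_Ioo
  apply ContinuousOn.mul
  · apply ContinuousOn.rpow_const (continuous_const.sub continuous_id).continuousOn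
    intro x hx
    left
    simp only [Pi.sub_apply, id_eq]
    intro hcon; rw [sub_eq_zero] at hcon; exact (ne_of_gt hx.2) hcon
  · exact (continuousOn_mlW hα hβ).mono (fun x hx => hx.1)

lemma kernel_v_integrableOn (hα : 0 < α) (hβ : 0 < β) (hc : 0 < c) (ht : 0 < t) :
    IntegrableOn (fun s => (t-s) ^ (c-1) * mlW α β s) (Ioo 0 t) := by
  apply Integrable.mono ((beta_integrableOn hc hβ ht).const_mul (Cml α β t))
    (kernel_meas hc hβ hα ht)
  filter_upwards [ae_restrict_mem measurableSet_Ioo] with s hs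
  have h1 : (0:ℝ) < t - s := by linarith [hs.2]
  have hc0 : (0:ℝ) ≤ Cml α β t := Cml_nonneg hα hβ ht.le
  have hn0 : (0:ℝ) ≤ Cml α β t * ((t-s) ^ (c-1) * s ^ (β-1)) :=
    mul_nonneg hc0 (mul_nonneg (Real.rpow_nonneg h1.le _) (Real.rpow_nonneg hs.1.le _))
  rw [Real.norm_eq_abs, Real.norm_eq_abs, abs_mul,
    abs_of_nonneg (Real.rpow_nonneg h1.le _), abs_of_nonneg hn0]
  calc (t-s) ^ (c-1) * |mlW α β s| ≤ (t-s) ^ (c-1) * (s ^ (β-1) * Cml α β t) := by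
        apply mul_le_mul_of_nonneg_left (abs_mlW_le hα hβ hs.1 hs.2.le)
          (Real.rpow_nonneg h1.le _)
    _ = Cml α β t * ((t-s) ^ (c-1) * s ^ (β-1)) := by ring

lemma mlW_integrableOn (hα : 0 < α) (hβ : 0 < β) (ht : 0 < t) :
    IntegrableOn (mlW α β) (Ioo 0 t) := by
  have key := kernel_v_integrableOn hα hβ one_pos ht
  apply key.congr_fun _ measurableSet_Ioo
  intro s hs
  simp only [sub_self, Real.rpow_zero, one_mul]


lemma v_pos_small (hα : 0 < α) (hα1 : α < 1) :
    ∃ t1 : ℝ, 0 < t1 ∧ t1 ≤ 1 ∧ ∀ s, 0 < s → s ≤ t1 → 0 < mlW α α s := by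
  set C := Cml α (α + α) 1 with hC
  have hC0 : 0 ≤ C := Cml_nonneg hα (by linarith) one_pos.le
  have hΓ : 0 < Real.Gamma α := Real.Gamma_pos_of_pos hα
  set ε := 1 / (Real.Gamma α * (C + 1)) with hε
  have hεpos : 0 < ε := by positivity
  refine ⟨min 1 (ε ^ α⁻¹), lt_min one_pos (Real.rpow_pos_of_pos hεpos _), min_le_left _ _, ?_⟩
  intro s hs hsle
  have hs1 : s ≤ 1 := le_trans hsle (min_le_left _ _)
  have hsα : s ^ α ≤ ε := by
    have h1 : s ^ α ≤ (ε ^ α⁻¹) ^ α :=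
      Real.rpow_le_rpow hs.le (le_trans hsle (min_le_right _ _)) hα.le
    rwa [← Real.rpow_mul hεpos.le, inv_mul_cancel₀ hα.ne', Real.rpow_one] at h1
  rw [mlW_shift hα hα hs]
  have hbd : |mlW α (α + α) s| ≤ s ^ (α + α - 1) * C :=
    abs_mlW_le hα (by linarith) hs hs1
  have hsplit : s ^ (α + α - 1) = s ^ (α - 1) * s ^ α := by
    rw [← Real.rpow_add hs]; ring_nf
  have hkey : s ^ (α - 1) * s ^ α * C < s ^ (α - 1) / Real.Gamma α := by
    have h2 : s ^ α * C < 1 / Real.Gamma α := by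
      calc s ^ α * C ≤ ε * C := by
            apply mul_le_mul_of_nonneg_right hsα hC0
        _ < 1 / Real.Gamma α := by
            rw [hε]
            rw [div_mul_eq_mul_div, div_lt_div_iff₀ (by positivity) hΓ]
            nlinarith
    have h3 : 0 < s ^ (α - 1) := Real.rpow_pos_of_pos hs _
    calc s ^ (α - 1) * s ^ α * C = s ^ (α - 1) * (s ^ α * C) := by ring
      _ < s ^ (α - 1) * (1 / Real.Gamma α) := by
          exact mul_lt_mul_of_pos_left h2 h3
      _ = s ^ (α - 1) / Real.Gamma α := by ring
  have := le_trans (neg_abs_le _) (le_refl (mlW α (α+α) s))  -- dummy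
  have h4 : mlW α (α + α) s ≤ s ^ (α + α - 1) * C := le_trans (le_abs_self _) hbd
  rw [hsplit] at h4
  linarith
end new





section new
variable {α t : ℝ}

lemma identE (hα : 0 < α) (ht : 0 < t) :
    ∫ s in Ioo 0 t, (t-s) ^ (α-1) * mlW α α s
      = t ^ (α-1) - Real.Gamma α * mlW α α t := by
  rw [master hα hα hα ht]
  have hΓ : (0:ℝ) < Real.Gamma α := Real.Gamma_pos_of_pos hα
  have hsh := mlW_shift hα hα ht
  have h1 : mlW α (α + α) t = t ^ (α-1) / Real.Gamma α - mlW α α t := by linarith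
  rw [h1, mul_sub, mul_div_cancel₀ _ hΓ.ne']

lemma kernel_int_Ico (hα : 0 < α) {a b : ℝ} (hab : a < b) :
    IntegrableOn (fun s => (b-s) ^ (α-1)) (Ico a b) ∧
      ∫ s in Ico a b, (b-s) ^ (α-1) = (b-a) ^ α / α := by
  have h0 : IntervalIntegrable (fun y : ℝ => y ^ (α-1)) volume 0 (b-a) :=
    intervalIntegrable_rpow' (by linarith)
  have h1 : IntervalIntegrable (fun s : ℝ => (b-s) ^ (α-1)) volume a b := by
    have := h0.comp_sub_left b
    rw [sub_sub_cancel, sub_zero] at this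
    exact this.symm
  constructor
  · rw [integrableOn_Ico_iff_integrableOn_Ioo]
    exact (h1.1).mono_set Ioo_subset_Ioc_self
  · rw [integral_Ico_eq_integral_Ioo, ← integral_Ioc_eq_integral_Ioo,
      ← intervalIntegral.integral_of_le hab.le]
    have h2 : ∫ s in a..b, (b-s) ^ (α-1) = ∫ y in (b-b)..(b-a), y ^ (α-1) :=
      intervalIntegral.integral_comp_sub_left (fun y : ℝ => y ^ (α-1)) b
    rw [h2, sub_self, integral_rpow (Or.inl (by linarith : (-1:ℝ) < α - 1)),
      Real.zero_rpow (by linarith : α - 1 + 1 ≠ 0)]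
    rw [show α - 1 + 1 = α by ring, sub_zero]

set_option maxHeartbeats 1000000 in
lemma v_pos (hα : 0 < α) (hα1 : α < 1) (ht : 0 < t) : 0 < mlW α α t := by
  by_contra hcon
  push_neg at hcon
  obtain ⟨t1, ht1pos, _, ht1⟩ := v_pos_small hα hα1
  set S := {r : ℝ | 0 < r ∧ mlW α α r ≤ 0} with hS
  have hSne : S.Nonempty := ⟨t, ht, hcon⟩
  have hSbdd : BddBelow S := ⟨0, fun r hr => hr.1.le⟩
  set τ := sInf S with hτ
  have hτlb : t1 ≤ τ := by
    apply le_csInf hSne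
    intro r hr
    by_contra hc
    push_neg at hc
    exact absurd hr.2 (not_le.2 (ht1 r hr.1 hc.le))
  have hτpos : 0 < τ := lt_of_lt_of_le ht1pos hτlb
  have hvpos : ∀ s, 0 < s → s < τ → 0 < mlW α α s := by
    intro s hs hsτ
    by_contra hc
    push_neg at hc
    exact absurd (csInf_le hSbdd ⟨hs, hc⟩) (not_le.2 hsτ)
  have hvτ : mlW α α τ ≤ 0 := by
    by_contra hc
    push_neg at hc
    have hcont : ContinuousAt (mlW α α) τ :=
      (continuousOn_mlW hα hα).continuousAt (Ioi_mem_nhds hτpos)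
    have hnb : {x | 0 < mlW α α x} ∈ nhds τ := hcont.preimage_mem_nhds (Ioi_mem_nhds hc)
    obtain ⟨ε, hεpos, hball⟩ := Metric.mem_nhds_iff.1 hnb
    obtain ⟨r, hrS, hrlt⟩ := exists_lt_of_csInf_lt hSne (show sInf S < τ + ε by
      rw [← hτ]; linarith)
    have hrτ : τ ≤ r := csInf_le hSbdd hrS
    have hrball : r ∈ Metric.ball τ ε := by
      rw [Metric.mem_ball, Real.dist_eq, abs_lt]; constructor <;> linarith
    exact absurd hrS.2 (not_le.2 (hball hrball))
  have hΓ : (0:ℝ) < Real.Gamma α := Real.Gamma_pos_of_pos hα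
  set x0 := α * Real.Gamma α / 2 with hx0
  have hx0pos : 0 < x0 := by positivity
  set η := min (τ/2) ((x0 ^ α⁻¹)/2) with hη
  have hηpos : 0 < η := lt_min (by linarith) (by positivity)
  have hητ : η ≤ τ/2 := min_le_left _ _
  have hηα : η ^ α < x0 := by
    have h1 : η ^ α ≤ ((x0 ^ α⁻¹)/2) ^ α :=
      Real.rpow_le_rpow hηpos.le (min_le_right _ _) hα.le
    have h2 : ((x0 ^ α⁻¹)/2) ^ α = x0 / 2 ^ α := by
      rw [Real.div_rpow (Real.rpow_nonneg hx0pos.le _) (by norm_num : (0:ℝ) ≤ 2),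
        ← Real.rpow_mul hx0pos.le, inv_mul_cancel₀ hα.ne', Real.rpow_one]
    have h3 : (1:ℝ) < 2 ^ α := (Real.one_lt_rpow_iff_of_pos (by norm_num)).2 (Or.inl ⟨by norm_num, hα⟩)
    have h4 : x0 / 2 ^ α < x0 := by
      rw [div_lt_iff₀ (by linarith)]
      nlinarith
    linarith
  have hIccpos : ∀ s ∈ Icc (τ-η) τ, (0:ℝ) < s := fun s hs =>
    lt_of_lt_of_le (by linarith : (0:ℝ) < τ - η) hs.1
  obtain ⟨sm, hsmmem, hsmmax⟩ := (isCompact_Icc (a := τ-η) (b := τ)).exists_isMaxOn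
    ⟨τ, by constructor <;> linarith⟩
    ((continuousOn_mlW hα hα).mono (fun s hs => hIccpos s hs))
  set M := mlW α α sm with hM
  have hMlb : mlW α α (τ - η) ≤ M := hsmmax (show τ - η ∈ Icc (τ-η) τ by
    constructor <;> linarith)
  have hMpos : 0 < M := lt_of_lt_of_le (hvpos _ (by linarith) (by linarith)) hMlb
  have hsmτ : sm < τ := by
    rcases lt_or_eq_of_le hsmmem.2 with h | h
    · exact h
    · exfalso; rw [hM, h] at hMpos; linarith
  set δ := τ - sm with hδ
  have hδpos : 0 < δ := by linarith
  have hδη : δ ≤ η := by have := hsmmem.1; simp only [hδ]; linarith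
  have hsmpos : 0 < sm := hIccpos sm hsmmem
  have hEτ := identE hα hτpos
  have hEs := identE hα hsmpos
  have hsplitset : Ioo (0:ℝ) τ = Ioo 0 sm ∪ Ico sm τ :=
    (Ioo_union_Ico_eq_Ioo hsmpos hsmmem.2).symm
  have hint : IntegrableOn (fun s => (τ-s) ^ (α-1) * mlW α α s) (Ioo 0 τ) :=
    kernel_v_integrableOn hα hα hα hτpos
  have hint1 : IntegrableOn (fun s => (τ-s) ^ (α-1) * mlW α α s) (Ioo 0 sm) :=
    hint.mono_set (by rw [hsplitset]; exact subset_union_left)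
  have hint2 : IntegrableOn (fun s => (τ-s) ^ (α-1) * mlW α α s) (Ico sm τ) :=
    hint.mono_set (by rw [hsplitset]; exact subset_union_right)
  have hsplit : ∫ s in Ioo 0 τ, (τ-s) ^ (α-1) * mlW α α s
      = (∫ s in Ioo 0 sm, (τ-s) ^ (α-1) * mlW α α s)
        + ∫ s in Ico sm τ, (τ-s) ^ (α-1) * mlW α α s := by
    rw [hsplitset]
    exact setIntegral_union (Set.disjoint_left.2 fun x hx1 hx2 => absurd hx1.2 (not_lt.2 hx2.1)) measurableSet_Ico hint1 hint2
  -- bound 1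
  have hb1 : ∫ s in Ioo 0 sm, (τ-s) ^ (α-1) * mlW α α s
      ≤ τ ^ (α-1) - (τ ^ (α-1) / sm ^ (α-1)) * (Real.Gamma α * M) := by
    have hstep : ∫ s in Ioo 0 sm, (τ-s) ^ (α-1) * mlW α α s
        ≤ ∫ s in Ioo 0 sm, (τ ^ (α-1) / sm ^ (α-1)) * ((sm-s) ^ (α-1) * mlW α α s) := by
      apply setIntegral_mono_on hint1
        ((kernel_v_integrableOn hα hα hα hsmpos).const_mul _) measurableSet_Ioo
      intro s hs
      have hvs : 0 < mlW α α s := hvpos s hs.1 (lt_trans hs.2 hsmτ)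
      have hker : (τ-s) ^ (α-1) ≤ τ ^ (α-1) * (sm-s) ^ (α-1) / sm ^ (α-1) := by
        have hsms : 0 < sm - s := by linarith [hs.2]
        have hτs : 0 < τ - s := by linarith [hs.2, hsmτ]
        have e1 : ((τ-s) * sm) ^ (α-1) ≤ ((sm-s) * τ) ^ (α-1) := by
          apply Real.rpow_le_rpow_of_nonpos (by positivity) _ (by linarith)
          nlinarith [hs.1, hsmτ]
        rw [Real.mul_rpow hτs.le hsmpos.le, Real.mul_rpow hsms.le hτpos.le] at e1
        rw [le_div_iff₀ (Real.rpow_pos_of_pos hsmpos (α-1))]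
        nlinarith [e1]
      calc (τ-s) ^ (α-1) * mlW α α s
          ≤ (τ ^ (α-1) * (sm-s) ^ (α-1) / sm ^ (α-1)) * mlW α α s :=
            mul_le_mul_of_nonneg_right hker hvs.le
        _ = (τ ^ (α-1) / sm ^ (α-1)) * ((sm-s) ^ (α-1) * mlW α α s) := by ring
    rw [MeasureTheory.integral_const_mul, hEs, ← hM] at hstep
    have hτsm : (τ ^ (α-1) / sm ^ (α-1)) * sm ^ (α-1) = τ ^ (α-1) := by
      field_simp
    calc ∫ s in Ioo 0 sm, (τ-s) ^ (α-1) * mlW α α s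
        ≤ (τ ^ (α-1) / sm ^ (α-1)) * (sm ^ (α-1) - Real.Gamma α * M) := hstep
      _ = τ ^ (α-1) - (τ ^ (α-1) / sm ^ (α-1)) * (Real.Gamma α * M) := by
          rw [mul_sub, hτsm]
  -- bound 2
  have hb2 : ∫ s in Ico sm τ, (τ-s) ^ (α-1) * mlW α α s ≤ M * (δ ^ α / α) := by
    obtain ⟨hki, hkv⟩ := kernel_int_Ico hα hsmτ
    have hstep : ∫ s in Ico sm τ, (τ-s) ^ (α-1) * mlW α α s
        ≤ ∫ s in Ico sm τ, (τ-s) ^ (α-1) * M := by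
      apply setIntegral_mono_on hint2 (hki.mul_const M) measurableSet_Ico
      intro s hs
      have hvsM : mlW α α s ≤ M := hsmmax (show s ∈ Icc (τ-η) τ by
        constructor
        · linarith [hs.1, hsmmem.1]
        · linarith [hs.2])
      have hτs : (0:ℝ) ≤ τ - s := by linarith [hs.2]
      exact mul_le_mul_of_nonneg_left hvsM (Real.rpow_nonneg hτs _)
    rw [MeasureTheory.integral_mul_const, hkv] at hstep
    calc ∫ s in Ico sm τ, (τ-s) ^ (α-1) * mlW α α s ≤ (τ - sm) ^ α / α * M := hstep
      _ = M * (δ ^ α / α) := by rw [← hδ]; ring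
  -- lower bound on ratio
  have hratio : (1:ℝ)/2 ≤ τ ^ (α-1) / sm ^ (α-1) := by
    have h1 : τ ^ (α-1) / sm ^ (α-1) = (τ/sm) ^ (α-1) := by
      rw [Real.div_rpow hτpos.le hsmpos.le]
    have h2 : τ / sm ≤ 2 := by
      rw [div_le_iff₀ hsmpos]
      have := hsmmem.1; linarith
    have h3 : (2:ℝ) ^ (α-1:ℝ) ≤ (τ/sm) ^ (α-1) :=
      Real.rpow_le_rpow_of_nonpos (by positivity) h2 (by linarith)
    have h4 : (2:ℝ) ^ (-1:ℝ) ≤ (2:ℝ) ^ (α-1:ℝ) :=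
      Real.rpow_le_rpow_of_exponent_le (by norm_num) (by linarith)
    rw [Real.rpow_neg_one] at h4
    rw [h1]
    calc (1:ℝ)/2 = (2:ℝ)⁻¹ := by norm_num
      _ ≤ (2:ℝ) ^ (α-1:ℝ) := h4
      _ ≤ (τ/sm) ^ (α-1) := h3
  have hδα : δ ^ α / α ≤ η ^ α / α :=
    div_le_div_of_nonneg_right (Real.rpow_le_rpow hδpos.le hδη hα.le) hα.le
  -- combine
  have hcomb : Real.Gamma α * mlW α α τ
      ≥ (τ ^ (α-1) / sm ^ (α-1)) * (Real.Gamma α * M) - M * (δ ^ α / α) := by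
    have := hEτ
    linarith [hsplit, hb1, hb2]
  have hfinal : 0 < (τ ^ (α-1) / sm ^ (α-1)) * (Real.Gamma α * M) - M * (δ ^ α / α) := by
    have h5 : η ^ α / α < Real.Gamma α / 2 := by
      rw [div_lt_div_iff₀ hα (by norm_num : (0:ℝ) < 2)]
      rw [hx0] at hηα
      linarith
    have h6 : M * (δ ^ α / α) < M * (Real.Gamma α / 2) :=
      mul_lt_mul_of_pos_left (lt_of_le_of_lt hδα h5) hMpos
    have h7' := mul_le_mul_of_nonneg_right hratio (mul_nonneg hΓ.le hMpos.le)
    have h7 : M * (Real.Gamma α / 2) ≤ (τ ^ (α-1) / sm ^ (α-1)) * (Real.Gamma α * M) := by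
      have heq : M * (Real.Gamma α / 2) = 1/2 * (Real.Gamma α * M) := by ring
      rw [heq]; exact h7'
    linarith
  have h9 : Real.Gamma α * mlW α α τ ≤ 0 := mul_nonpos_iff.mpr (Or.inl ⟨hΓ.le, hvτ⟩)
  linarith
end new






section new2
variable {α t s : ℝ}

lemma shift1 (hα : 0 < α) (ht : 0 < t) : mlW α (1 + α) t = 1 - mlW α 1 t := by
  have h := mlW_shift hα one_pos ht
  rw [sub_self, Real.rpow_zero, Real.Gamma_one] at h
  norm_num at h
  linarith

lemma identA (hα : 0 < α) (ht : 0 < t) :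
    ∫ s in Ioo 0 t, (t-s) ^ (α-1) * mlW α 1 s
      = Real.Gamma α * (1 - mlW α 1 t) := by
  rw [master hα one_pos hα ht, shift1 hα ht]

lemma identB (hα : 0 < α) (hα1 : α < 1) (ht : 0 < t) :
    ∫ s in Ioo 0 t, (t-s) ^ ((1-α)-1) * mlW α α s
      = Real.Gamma (1-α) * mlW α 1 t := by
  rw [master hα hα (by linarith) ht, show α + (1-α) = 1 by ring]

lemma identC (hα : 0 < α) (ht : 0 < t) :
    ∫ s in Ioo 0 t, mlW α α s = 1 - mlW α 1 t := by
  have h := master hα hα one_pos ht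
  rw [Real.Gamma_one, one_mul, add_comm α 1, shift1 hα ht] at h
  rw [← h]
  apply setIntegral_congr_fun measurableSet_Ioo
  intro s hs
  simp [sub_self, Real.rpow_zero]

lemma u_mono (hα : 0 < α) (hα1 : α < 1) (hs : 0 < s) (hst : s ≤ t) :
    mlW α 1 t ≤ mlW α 1 s := by
  have ht : 0 < t := lt_of_lt_of_le hs hst
  have h1 : ∫ x in Ioo 0 s, mlW α α x ≤ ∫ x in Ioo 0 t, mlW α α x := by
    apply setIntegral_mono_set (mlW_integrableOn hα hα ht)
    · filter_upwards [ae_restrict_mem measurableSet_Ioo] with x hx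
      exact (v_pos hα hα1 hx.1).le
    · exact HasSubset.Subset.eventuallyLE (Ioo_subset_Ioo le_rfl hst)
  rw [identC hα hs, identC hα ht] at h1
  linarith

lemma lower_bd (hα : 0 < α) (hα1 : α < 1) (ht : 0 < t) :
    1 / (1 + Real.Gamma (1-α) * t ^ α) ≤ mlW α 1 t := by
  have hΓ : (0:ℝ) < Real.Gamma (1-α) := Real.Gamma_pos_of_pos (by linarith)
  have htα : (0:ℝ) < t ^ α := Real.rpow_pos_of_pos ht α
  have hmono : ∫ s in Ioo 0 t, t ^ (-α) * mlW α α s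
      ≤ ∫ s in Ioo 0 t, (t-s) ^ ((1-α)-1) * mlW α α s := by
    apply setIntegral_mono_on ((mlW_integrableOn hα hα ht).const_mul _)
      (kernel_v_integrableOn hα hα (by linarith) ht) measurableSet_Ioo
    intro s hs
    have hts : 0 < t - s := by linarith [hs.2]
    have hker : t ^ (-α) ≤ (t-s) ^ ((1-α)-1) := by
      rw [show (1-α)-1 = -α by ring]
      exact Real.rpow_le_rpow_of_nonpos hts (by linarith [hs.1]) (by linarith)
    exact mul_le_mul_of_nonneg_right hker (v_pos hα hα1 hs.1).le
  rw [identB hα hα1 ht, MeasureTheory.integral_const_mul, identC hα ht] at hmono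
  rw [Real.rpow_neg ht.le, inv_mul_le_iff₀ htα] at hmono
  rw [div_le_iff₀ (by positivity : (0:ℝ) < 1 + Real.Gamma (1-α) * t ^ α)]
  nlinarith [hmono]

lemma upper_bd (hα : 0 < α) (hα1 : α < 1) (ht : 0 < t) :
    mlW α 1 t ≤ Real.Gamma (1+α) / (Real.Gamma (1+α) + t ^ α) := by
  have hΓ1 : (0:ℝ) < Real.Gamma (1+α) := Real.Gamma_pos_of_pos (by linarith)
  have htα : (0:ℝ) < t ^ α := Real.rpow_pos_of_pos ht α
  have hΓα : (0:ℝ) < Real.Gamma α := Real.Gamma_pos_of_pos hα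
  obtain ⟨hki, hkv⟩ := kernel_int_Ico hα (show (0:ℝ) < t from ht)
  have hki' : IntegrableOn (fun s => (t-s) ^ (α-1)) (Ioo 0 t) :=
    hki.mono_set Ioo_subset_Ico_self
  have hmono : ∫ s in Ioo 0 t, (t-s) ^ (α-1) * mlW α 1 t
      ≤ ∫ s in Ioo 0 t, (t-s) ^ (α-1) * mlW α 1 s := by
    apply setIntegral_mono_on (hki'.mul_const _)
      (kernel_v_integrableOn hα one_pos hα ht) measurableSet_Ioo
    intro s hs
    have hts : (0:ℝ) ≤ t - s := by linarith [hs.2]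
    exact mul_le_mul_of_nonneg_left (u_mono hα hα1 hs.1 hs.2.le) (Real.rpow_nonneg hts _)
  rw [MeasureTheory.integral_mul_const, identA hα ht] at hmono
  have hval : ∫ s in Ioo 0 t, (t-s) ^ (α-1) = t ^ α / α := by
    rw [← integral_Ico_eq_integral_Ioo, hkv, sub_zero]
  rw [hval] at hmono
  have hΓ1' : Real.Gamma (1+α) = α * Real.Gamma α := by
    rw [add_comm, Real.Gamma_add_one hα.ne']
  have hm2 : t ^ α * mlW α 1 t ≤ α * (Real.Gamma α * (1 - mlW α 1 t)) := by
    have h3 := mul_le_mul_of_nonneg_left hmono hα.le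
    rw [show α * (t ^ α / α * mlW α 1 t) = t ^ α * mlW α 1 t from by field_simp] at h3
    exact h3
  rw [le_div_iff₀ (by positivity : (0:ℝ) < Real.Gamma (1+α) + t ^ α), hΓ1']
  nlinarith [hm2]
end new2


theorem ml_two_sided_bounds (α x : ℝ) (hα : α ∈ Set.Ioo (0:ℝ) 1) (hx : 0 < x) :
    1 / (1 + Real.Gamma (1 - α) * x) ≤ mlE α 1 (-x) ∧
    mlE α 1 (-x) ≤ Real.Gamma (1 + α) / (Real.Gamma (1 + α) + x) := by
  obtain ⟨hα0, hα1⟩ := hα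
  set t := x ^ α⁻¹ with htdef
  have ht : 0 < t := Real.rpow_pos_of_pos hx _
  have htα : t ^ α = x := by
    rw [htdef, ← Real.rpow_mul hx.le, inv_mul_cancel₀ hα0.ne', Real.rpow_one]
  have hE : mlE α 1 (-x) = mlW α 1 t := by
    rw [mlE, mlW]
    congr 1; funext n
    rw [show (n:ℝ)*α + 1 - 1 = α * (n:ℝ) by ring]
    rw [Real.rpow_mul ht.le, htα, Real.rpow_natCast, neg_pow]
  constructor
  · rw [hE, ← htα]; exact lower_bd hα0 hα1 ht
  · rw [hE, ← htα]; exact upper_bd hα0 hα1 ht
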